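/- Let n ≥ 2, 0 ≤ p ≤ n−1, and let ε ∈ {−1,1}^n have ε_j = 1 for j ≤ p and ε_j = −1 for j > p (so ε_n = −1). Let ι_− : ℝ^n → ℂ^n be the totally real embedding ι_−(w) = (w_1,…,w_p, i w_{p+1},…, i w_n). Then for every entire function F : ℂ^n → ℂ, every μ ∈ ℂ, ℓ ∈ ℕ and every w ∈ ℝ^n: (𝒟^μ_ℓ[ε](F ∘ ι_−))(w) = i^ℓ · (𝒟^μ_ℓ[ℂ] F)(ι_−(w)). Equivalently, the operator on the totally real form ℝ^{p,q}_− induced by restriction of the holomorphic Juhl operator 𝒟^μ_ℓ[ℂ] equals e^{−πiℓ/2} (𝒟^μ_ℓ)_{ℝ^{p,q}_−}. (Scalar constituent of Lemma 6.1.) -/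

import Mathlib

open scoped BigOperators

set_option maxHeartbeats 1600000
set_option synthInstance.maxHeartbeats 400000

open Metric Complex intervalIntegral Real

noncomputable section
/-- The `j`-th partial derivative (real variables). -/
def pd {n : ℕ} {E : Type} [NormedAddCommGroup E] [NormedSpace ℝ E]
    (j : Fin n) (f : (Fin n → ℝ) → E) : (Fin n → ℝ) → E :=
  fun x => fderiv ℝ f x (Pi.single j 1)

/-- The coefficient `a_k(μ,ℓ)`. -/
def akCoeff (μ : ℂ) (ℓ k : ℕ) : ℂ :=
  ((-1 : ℂ) ^ k * 2 ^ (ℓ - 2 * k) / (Nat.factorial k * Nat.factorial (ℓ - 2 * k))) *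
    ∏ j ∈ Finset.Ico ((ℓ + 1) / 2) (ℓ - k), (μ + (j : ℂ))

/-- The signed Laplacian `-ε i₀ ∑_{j ≠ i₀} ε j ∂_j²`. -/
def sLap {n : ℕ} (ε : Fin n → ℝ) (i₀ : Fin n) (f : (Fin n → ℝ) → ℂ) : (Fin n → ℝ) → ℂ :=
  fun x => (-(ε i₀ : ℂ)) * ∑ j ∈ Finset.univ.erase i₀, (ε j : ℂ) * pd j (pd j f) x

/-- The scalar Juhl operator `𝒟^μ_ℓ[ε]` with distinguished ("last") coordinate `i₀`. -/
def juhlOp {n : ℕ} (ε : Fin n → ℝ) (i₀ : Fin n) (μ : ℂ) (ℓ : ℕ)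
    (f : (Fin n → ℝ) → ℂ) : (Fin n → ℝ) → ℂ :=
  fun x => ∑ k ∈ Finset.range (ℓ / 2 + 1),
    akCoeff μ ℓ k * ((sLap ε i₀)^[k] ((pd i₀)^[ℓ - 2 * k] f)) x

/-- The `j`-th complex partial derivative. -/
def pdC {n : ℕ} (j : Fin n) (F : (Fin n → ℂ) → ℂ) : (Fin n → ℂ) → ℂ :=
  fun z => fderiv ℂ F z (Pi.single j 1)

/-- The holomorphic Laplacian `-∑_{j ≠ i₀} ∂_j²`. -/
def sLapC {n : ℕ} (i₀ : Fin n) (F : (Fin n → ℂ) → ℂ) : (Fin n → ℂ) → ℂ :=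
  fun z => -∑ j ∈ Finset.univ.erase i₀, pdC j (pdC j F) z

/-- The holomorphic Juhl operator `𝒟^μ_ℓ[ℂ]` with distinguished coordinate `i₀`. -/
def juhlOpC {n : ℕ} (i₀ : Fin n) (μ : ℂ) (ℓ : ℕ)
    (F : (Fin n → ℂ) → ℂ) : (Fin n → ℂ) → ℂ :=
  fun z => ∑ k ∈ Finset.range (ℓ / 2 + 1),
    akCoeff μ ℓ k * ((sLapC i₀)^[k] ((pdC i₀)^[ℓ - 2 * k] F)) z


variable {n : ℕ}

/-- derivative of the slice `s ↦ G (x + s • v)` at `0`. -/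
lemma hasDerivAt_slice {G : (Fin n → ℂ) → ℂ} (hG : Differentiable ℂ G)
    (x v : Fin n → ℂ) :
    HasDerivAt (fun s : ℂ => G (x + s • v)) (fderiv ℂ G x v) 0 := by
  have h1 : HasDerivAt (fun s : ℂ => x + s • v) v 0 := by
    simpa using (((hasDerivAt_id (0:ℂ)).smul_const v).const_add x)
  have h2 : HasFDerivAt G (fderiv ℂ G x) (x + (0:ℂ) • v) := by
    simpa using (hG (x + (0:ℂ) • v)).hasFDerivAt
  exact h2.comp_hasDerivAt 0 h1

/-- Cauchy integral formula for a directional derivative. -/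
lemma fderiv_eq_circleIntegral {G : (Fin n → ℂ) → ℂ} (hG : Differentiable ℂ G)
    (x v : Fin n → ℂ) :
    fderiv ℂ G x v = (2 * Real.pi * Complex.I : ℂ)⁻¹ •
      ∮ z in C(0, 1), z ^ (-2 : ℤ) • G (x + z • v) := by
  have hφ : Differentiable ℂ (fun s : ℂ => G (x + s • v)) :=
    hG.comp ((differentiable_id.smul_const v).const_add x)
  have h := (hφ.diffContOnCl (s := ball (0:ℂ) 1)).deriv_eq_smul_circleIntegral (c := 0) (R := 1)
    one_pos
  rw [(hasDerivAt_slice hG x v).deriv] at h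
  have e : (∮ z in C(0, 1), z ^ (-2 : ℤ) • G (x + z • v))
      = ∮ z in C(0, 1), (1 / (z - 0) ^ 2) • G (x + z • v) := by
    congr 1; funext z; simp [zpow_neg]
  rw [e, h, smul_smul, inv_mul_cancel₀ (by simp [Real.pi_ne_zero]), one_smul]

/-- The kernel. -/
def kern (θ : ℝ) : ℂ := circleMap 0 1 θ * Complex.I * (circleMap 0 1 θ) ^ (-2 : ℤ)

lemma fderiv_eq_intervalIntegral {G : (Fin n → ℂ) → ℂ} (hG : Differentiable ℂ G)
    (x v : Fin n → ℂ) :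
    fderiv ℂ G x v = (2 * Real.pi * Complex.I : ℂ)⁻¹ *
      ∫ θ in (0:ℝ)..(2 * Real.pi), kern θ * G (x + circleMap 0 1 θ • v) := by
  rw [fderiv_eq_circleIntegral hG x v]
  rw [smul_eq_mul]
  congr 1
  simp only [circleIntegral, deriv_circleMap, smul_eq_mul, kern]
  congr 1
  funext θ
  ring

lemma norm_kern (θ : ℝ) : ‖kern θ‖ = 1 := by
  simp only [kern, norm_mul, norm_circleMap_zero, Complex.norm_I, norm_zpow]
  norm_num

lemma norm_fderiv_le_of_bound {G : (Fin n → ℂ) → ℂ} (hG : Differentiable ℂ G)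
    {M : ℝ} {c : Fin n → ℂ} {r : ℝ}
    (hM : ∀ z ∈ closedBall c (r + 1), ‖G z‖ ≤ M) {y : Fin n → ℂ}
    (hy : y ∈ closedBall c r) : ‖fderiv ℂ G y‖ ≤ M := by
  have hM0 : 0 ≤ M := le_trans (norm_nonneg _) (hM y (closedBall_subset_closedBall (by linarith) hy))
  refine ContinuousLinearMap.opNorm_le_bound _ hM0 (fun u => ?_)
  rcases eq_or_ne u 0 with rfl | hu
  · simp
  · -- reduce to unit vector
    set u' : Fin n → ℂ := (‖u‖ : ℂ)⁻¹ • u with hu'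
    have hnu : ‖u‖ ≠ 0 := norm_ne_zero_iff.mpr hu
    have hu'norm : ‖u'‖ = 1 := by
      rw [hu', norm_smul]
      simp [hnu, norm_inv]
    have key : ‖fderiv ℂ G y u'‖ ≤ M := by
      have hφ : Differentiable ℂ (fun s : ℂ => G (y + s • u')) :=
        hG.comp ((differentiable_id.smul_const u').const_add y)
      have hb : ∀ z ∈ sphere (0:ℂ) 1, ‖G (y + z • u')‖ ≤ M := by
        intro z hz
        apply hM
        rw [mem_closedBall] at *
        calc dist (y + z • u') c ≤ dist (y + z • u') y + dist y c := dist_triangle _ _ _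
          _ ≤ 1 + r := by
              rw [dist_eq_norm]
              simp only [add_sub_cancel_left]
              rw [norm_smul, hu'norm]
              have : ‖z‖ = 1 := by simpa [mem_sphere_iff_norm] using hz
              rw [this]
              linarith [hy]
          _ = r + 1 := by ring
      have := Complex.norm_deriv_le_of_forall_mem_sphere_norm_le (c := 0) one_pos
        hφ.diffContOnCl hb
      rw [(hasDerivAt_slice hG y u').deriv] at this
      simpa using this
    have : fderiv ℂ G y u = (‖u‖ : ℂ) • fderiv ℂ G y u' := by
      rw [hu', ← map_smul]
      congr 1
      rw [smul_smul]
      rw [mul_inv_cancel₀ (by exact_mod_cast hnu)]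
      simp
    rw [this, norm_smul]
    simp only [Complex.norm_real, norm_norm]
    have := mul_le_mul_of_nonneg_left key (norm_nonneg u)
    linarith

lemma dirDeriv_differentiable {G : (Fin n → ℂ) → ℂ} (hG : Differentiable ℂ G)
    (v : Fin n → ℂ) : Differentiable ℂ (fun x => fderiv ℂ G x v) := by
  intro x₀
  -- bound for G on a big ball
  obtain ⟨M, hM⟩ : ∃ M, ∀ z ∈ closedBall x₀ (‖v‖ + 2), ‖G z‖ ≤ M := by
    obtain ⟨M, hM⟩ := (isCompact_closedBall x₀ (‖v‖ + 2)).exists_bound_of_continuousOn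
      hG.continuous.continuousOn
    exact ⟨M, hM⟩
  -- derivative bound on the intermediate ball
  have hfd : ∀ y ∈ closedBall x₀ (‖v‖ + 1), ‖fderiv ℂ G y‖ ≤ M := by
    intro y hy
    refine norm_fderiv_le_of_bound hG (r := ‖v‖ + 1) (fun z hz => hM z ?_) hy
    exact closedBall_subset_closedBall (by linarith) hz
  set F : (Fin n → ℂ) → ℝ → ℂ :=
    fun x θ => kern θ * G (x + circleMap 0 1 θ • v) with hF
  set F' : (Fin n → ℂ) → ℝ → (Fin n → ℂ) →L[ℂ] ℂ :=
    fun x θ => kern θ • fderiv ℂ G (x + circleMap 0 1 θ • v) with hF'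
  have hmem : ∀ (x : Fin n → ℂ), x ∈ ball x₀ 1 → ∀ θ : ℝ,
      x + circleMap 0 1 θ • v ∈ closedBall x₀ (‖v‖ + 1) := by
    intro x hx θ
    rw [mem_closedBall]
    calc dist (x + circleMap 0 1 θ • v) x₀
        ≤ dist (x + circleMap 0 1 θ • v) x + dist x x₀ := dist_triangle _ _ _
      _ ≤ ‖v‖ + 1 := by
          have h1 : dist (x + circleMap 0 1 θ • v) x = ‖circleMap 0 1 θ • v‖ := by
            rw [dist_eq_norm]; simp
          have h2 : ‖circleMap 0 1 θ • v‖ ≤ ‖v‖ := by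
            rw [norm_smul]
            have : ‖circleMap 0 1 θ‖ = 1 := by
              simp [norm_circleMap_zero]
            rw [this, one_mul]
          have h3 : dist x x₀ ≤ 1 := le_of_lt (mem_ball.mp hx)
          linarith
  have hKcont : Continuous kern := by
    apply Continuous.mul
    · exact (continuous_circleMap 0 1).mul continuous_const
    · apply Continuous.zpow₀ (continuous_circleMap 0 1)
      intro θ
      left
      intro h
      have : ‖circleMap 0 1 θ‖ = 1 := by simp [norm_circleMap_zero]
      rw [h] at this
      simp at this
  have hcont : ∀ x : Fin n → ℂ, Continuous (F x) := by
    intro x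
    exact hKcont.mul (hG.continuous.comp
      (continuous_const.add ((continuous_circleMap 0 1).smul continuous_const)))
  have hdiff : ∀ (θ : ℝ) (x : Fin n → ℂ), HasFDerivAt (fun y => F y θ) (F' x θ) x := by
    intro θ x
    have h1 : HasFDerivAt (fun y : Fin n → ℂ => y + circleMap 0 1 θ • v)
        (ContinuousLinearMap.id ℂ (Fin n → ℂ)) x := (hasFDerivAt_id x).add_const _
    have h2 : HasFDerivAt G (fderiv ℂ G (x + circleMap 0 1 θ • v))
        (x + circleMap 0 1 θ • v) := (hG _).hasFDerivAt
    have h3 := h2.comp x h1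
    rw [ContinuousLinearMap.comp_id] at h3
    exact h3.const_mul (kern θ)
  have main := intervalIntegral.hasFDerivAt_integral_of_dominated_of_fderiv_le
    (𝕜 := ℂ) (μ := MeasureTheory.volume) (a := 0) (b := 2 * Real.pi)
    (F := F) (F' := F') (x₀ := x₀) (bound := fun _ => M) (ball_mem_nhds x₀ one_pos)
    (Filter.Eventually.of_forall fun x => (hcont x).aestronglyMeasurable)
    ((hcont x₀).intervalIntegrable _ _)
    ?meas ?bnd (intervalIntegrable_const) ?dif
  case meas =>
    have m1 : MeasureTheory.StronglyMeasurable
        (fun θ : ℝ => fderiv ℂ G (x₀ + circleMap 0 1 θ • v)) :=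
      ((measurable_fderiv ℂ G).comp
        (continuous_const.add ((continuous_circleMap 0 1).smul
          (continuous_const : Continuous fun _ : ℝ => v))).measurable).stronglyMeasurable
    exact (hKcont.stronglyMeasurable.smul m1).aestronglyMeasurable
  case bnd =>
    apply MeasureTheory.ae_of_all
    intro θ _ x hx
    have h1 : ‖F' x θ‖ ≤ ‖kern θ‖ * ‖fderiv ℂ G (x + circleMap 0 1 θ • v)‖ :=
      ContinuousLinearMap.opNorm_smul_le _ _
    rw [norm_kern, one_mul] at h1
    exact h1.trans (hfd _ (hmem x hx θ))
  case dif =>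
    apply MeasureTheory.ae_of_all
    intro θ _ x _
    exact hdiff θ x
  have heq : (fun x => fderiv ℂ G x v) = fun x =>
      (2 * Real.pi * Complex.I : ℂ)⁻¹ * ∫ θ in (0:ℝ)..(2 * Real.pi), F x θ := by
    funext x
    exact fderiv_eq_intervalIntegral hG x v
  rw [heq]
  exact (main.differentiableAt).const_mul _

/-! ### The totally real embedding and chain rules -/

/-- coefficient of the embedding in coordinate `j`. -/
def cc (p : ℕ) {n : ℕ} (j : Fin n) : ℂ := if (j : ℕ) < p then 1 else Complex.I

/-- The totally real embedding as a continuous `ℝ`-linear map. -/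
def emb (p : ℕ) {n : ℕ} : (Fin n → ℝ) →L[ℝ] (Fin n → ℂ) :=
  ContinuousLinearMap.pi fun j =>
    cc p j • (Complex.ofRealCLM.comp (ContinuousLinearMap.proj j))

lemma emb_apply {p n : ℕ} (w : Fin n → ℝ) :
    emb p w = fun j => cc p j * (w j : ℂ) := rfl

lemma emb_eq_ite {p n : ℕ} (w : Fin n → ℝ) :
    (fun j : Fin n => if (j : ℕ) < p then (w j : ℂ) else Complex.I * w j) = emb p w := by
  funext j
  rw [emb_apply]
  simp only [cc]
  split_ifs <;> simp

lemma emb_single {p n : ℕ} (j : Fin n) :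
    emb p (Pi.single j 1) = cc p j • (Pi.single j 1 : Fin n → ℂ) := by
  funext i
  rw [emb_apply]
  rcases eq_or_ne i j with rfl | hij
  · simp
  · simp [Pi.single_apply, hij]

lemma pdC_differentiable {n : ℕ} {G : (Fin n → ℂ) → ℂ} (hG : Differentiable ℂ G) (j : Fin n) :
    Differentiable ℂ (pdC j G) :=
  dirDeriv_differentiable hG _

lemma pdC_iter_differentiable {n : ℕ} (i₀ : Fin n) (m : ℕ) {G : (Fin n → ℂ) → ℂ}
    (hG : Differentiable ℂ G) : Differentiable ℂ ((pdC i₀)^[m] G) := by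
  induction m generalizing G with
  | zero => simpa using hG
  | succ m ih =>
      rw [Function.iterate_succ_apply]
      exact ih (pdC_differentiable hG i₀)

lemma pdC_const_mul {n : ℕ} {G : (Fin n → ℂ) → ℂ} (hG : Differentiable ℂ G) (j : Fin n) (c : ℂ) :
    pdC j (fun z => c * G z) = fun z => c * pdC j G z := by
  funext z
  unfold pdC
  rw [fderiv_const_mul (hG z) c]
  simp

lemma sLapC_differentiable {n : ℕ} (i₀ : Fin n) {G : (Fin n → ℂ) → ℂ}
    (hG : Differentiable ℂ G) : Differentiable ℂ (sLapC i₀ G) := by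
  unfold sLapC
  apply Differentiable.neg
  apply Differentiable.fun_sum
  intro j _
  exact pdC_differentiable (pdC_differentiable hG j) j

lemma sLapC_const_mul {n : ℕ} (i₀ : Fin n) {G : (Fin n → ℂ) → ℂ}
    (hG : Differentiable ℂ G) (c : ℂ) :
    sLapC i₀ (fun z => c * G z) = fun z => c * sLapC i₀ G z := by
  unfold sLapC
  funext z
  rw [mul_neg, Finset.mul_sum]
  congr 1
  apply Finset.sum_congr rfl
  intro j _
  rw [pdC_const_mul hG j c, pdC_const_mul (pdC_differentiable hG j) j c]

/-- First-order chain rule through the embedding. -/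
lemma pd_comp {p n : ℕ} {G : (Fin n → ℂ) → ℂ} (hG : Differentiable ℂ G) (j : Fin n) :
    pd j (fun y => G (emb p y)) = fun w => cc p j * pdC j G (emb p w) := by
  funext w
  have h : HasFDerivAt (fun y : Fin n → ℝ => G (emb p y))
      (((fderiv ℂ G (emb p w)).restrictScalars ℝ).comp (emb p : (Fin n → ℝ) →L[ℝ] (Fin n → ℂ)))
      w := ((hG (emb p w)).hasFDerivAt.restrictScalars ℝ).comp w (emb p).hasFDerivAt
  unfold pd
  rw [h.fderiv]
  simp only [ContinuousLinearMap.coe_comp', Function.comp_apply,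
    ContinuousLinearMap.coe_restrictScalars']
  rw [emb_single, map_smul]
  simp only [smul_eq_mul]
  rfl

/-- Second-order chain rule. -/
lemma pd2_comp {p n : ℕ} {G : (Fin n → ℂ) → ℂ} (hG : Differentiable ℂ G) (j : Fin n) :
    pd j (pd j (fun y => G (emb p y)))
      = fun w => cc p j * (cc p j * pdC j (pdC j G) (emb p w)) := by
  rw [pd_comp hG j]
  have h2 : pd j (fun w => cc p j * pdC j G (emb p w))
      = fun w => cc p j * pdC j (fun z => cc p j * pdC j G z) (emb p w) :=
    pd_comp ((pdC_differentiable hG j).const_mul (cc p j)) j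
  rw [h2]
  funext w
  rw [pdC_const_mul (pdC_differentiable hG j) j (cc p j)]

/-- Iterated `∂_{i₀}` through the embedding (with a constant carried along). -/
lemma iter_pd {p n : ℕ} (i₀ : Fin n) (hi₀ : ¬ ((i₀ : ℕ) < p)) (m : ℕ) :
    ∀ (G : (Fin n → ℂ) → ℂ), Differentiable ℂ G → ∀ c : ℂ,
    (pd i₀)^[m] (fun y => c * G (emb p y))
      = fun w => c * (Complex.I ^ m * (pdC i₀)^[m] G (emb p w)) := by
  induction m with
  | zero => intro G hG c; simp
  | succ m ih =>
      intro G hG c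
      rw [Function.iterate_succ_apply]
      have h1 : pd i₀ (fun y => c * G (emb p y))
          = fun w => (Complex.I * c) * pdC i₀ G (emb p w) := by
        have := pd_comp (p := p) (hG.const_mul c) i₀
        rw [this]
        funext w
        rw [pdC_const_mul hG i₀ c]
        have hcc : cc p i₀ = Complex.I := by simp [cc, hi₀]
        rw [hcc]; ring
      rw [h1, ih (pdC i₀ G) (pdC_differentiable hG i₀) (Complex.I * c)]
      funext w
      rw [show (pdC i₀)^[m] (pdC i₀ G) = (pdC i₀)^[m+1] G from
        (Function.iterate_succ_apply (pdC i₀) m G).symm]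
      ring

/-- The signed Laplacian through the embedding. -/
lemma sLap_comp {p n : ℕ} (ε : Fin n → ℝ)
    (hε : ∀ j : Fin n, ε j = if (j : ℕ) < p then 1 else -1)
    (i₀ : Fin n) (hi₀ : ¬ ((i₀ : ℕ) < p))
    {G : (Fin n → ℂ) → ℂ} (hG : Differentiable ℂ G) :
    sLap ε i₀ (fun y => G (emb p y)) = fun w => -(sLapC i₀ G (emb p w)) := by
  funext w
  unfold sLap sLapC
  have hterm : ∀ j : Fin n, (ε j : ℂ) * pd j (pd j (fun y => G (emb p y))) w
      = pdC j (pdC j G) (emb p w) := by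
    intro j
    rw [pd2_comp hG j]
    rw [hε j]
    simp only [cc]
    split_ifs with h
    · push_cast; ring
    · push_cast
      linear_combination (-(pdC j (pdC j G) ((emb p) w))) * Complex.I_sq
  have hε₀ : (ε i₀ : ℂ) = -1 := by rw [hε i₀]; simp [hi₀]
  rw [hε₀]
  rw [Finset.sum_congr rfl (fun j _ => hterm j)]
  ring

/-- Iterated signed Laplacian through the embedding. -/
lemma iter_sLap {p n : ℕ} (ε : Fin n → ℝ)
    (hε : ∀ j : Fin n, ε j = if (j : ℕ) < p then 1 else -1)
    (i₀ : Fin n) (hi₀ : ¬ ((i₀ : ℕ) < p)) (k : ℕ) :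
    ∀ (G : (Fin n → ℂ) → ℂ), Differentiable ℂ G → ∀ c : ℂ,
    (sLap ε i₀)^[k] (fun y => c * G (emb p y))
      = fun w => c * ((-1 : ℂ) ^ k * (sLapC i₀)^[k] G (emb p w)) := by
  induction k with
  | zero => intro G hG c; simp
  | succ k ih =>
      intro G hG c
      rw [Function.iterate_succ_apply]
      have h1 : sLap ε i₀ (fun y => c * G (emb p y))
          = fun w => (-c) * sLapC i₀ G (emb p w) := by
        have := sLap_comp ε hε i₀ hi₀ (G := fun z => c * G z) (hG.const_mul c)
        rw [this]
        funext w
        rw [sLapC_const_mul i₀ hG c]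
        ring
      rw [h1, ih (sLapC i₀ G) (sLapC_differentiable i₀ hG) (-c)]
      funext w
      rw [show (sLapC i₀)^[k] (sLapC i₀ G) = (sLapC i₀)^[k+1] G from
        (Function.iterate_succ_apply (sLapC i₀) k G).symm]
      ring

/-- Main auxiliary identity, for an arbitrary distinguished coordinate. -/
lemma juhl_aux {p n : ℕ} (ε : Fin n → ℝ)
    (hε : ∀ j : Fin n, ε j = if (j : ℕ) < p then 1 else -1)
    (i₀ : Fin n) (hi₀ : ¬ ((i₀ : ℕ) < p))
    (F : (Fin n → ℂ) → ℂ) (hF : Differentiable ℂ F) (μ : ℂ) (ℓ : ℕ) (w : Fin n → ℝ) :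
    juhlOp ε i₀ μ ℓ (fun y => F (emb p y)) w
      = Complex.I ^ ℓ * juhlOpC i₀ μ ℓ F (emb p w) := by
  unfold juhlOp juhlOpC
  rw [Finset.mul_sum]
  apply Finset.sum_congr rfl
  intro k hk
  have h2k : 2 * k ≤ ℓ := by
    have := Finset.mem_range.mp hk
    omega
  have e1 : (pd i₀)^[ℓ - 2*k] (fun y => F (emb p y))
      = fun w => Complex.I ^ (ℓ - 2*k) * ((pdC i₀)^[ℓ - 2*k] F (emb p w)) := by
    have := iter_pd i₀ hi₀ (ℓ - 2*k) F hF 1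
    simpa using this
  rw [e1, iter_sLap ε hε i₀ hi₀ k ((pdC i₀)^[ℓ - 2*k] F)
    (pdC_iter_differentiable i₀ (ℓ - 2*k) hF) (Complex.I ^ (ℓ - 2*k))]
  have hI : (Complex.I) ^ (ℓ - 2*k) * (-1 : ℂ) ^ k = Complex.I ^ ℓ := by
    rw [show ((-1 : ℂ)) = Complex.I ^ 2 from (Complex.I_sq).symm, ← pow_mul, ← pow_add]
    congr 1
    omega
  show akCoeff μ ℓ k * (Complex.I ^ (ℓ - 2*k) *
      ((-1 : ℂ) ^ k * (sLapC i₀)^[k] ((pdC i₀)^[ℓ - 2*k] F) (emb p w)))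
    = Complex.I ^ ℓ * (akCoeff μ ℓ k * (sLapC i₀)^[k] ((pdC i₀)^[ℓ - 2*k] F) (emb p w))
  linear_combination (akCoeff μ ℓ k * (sLapC i₀)^[k] ((pdC i₀)^[ℓ - 2*k] F) (emb p w)) * hI

theorem stmt8 (n p : ℕ) (hn : 2 ≤ n) (hp : p ≤ n - 1) (ε : Fin n → ℝ)
    (hε : ∀ j : Fin n, ε j = if (j : ℕ) < p then 1 else -1)
    (F : (Fin n → ℂ) → ℂ) (hF : Differentiable ℂ F) (μ : ℂ) (ℓ : ℕ) (w : Fin n → ℝ) :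
    juhlOp ε ⟨n - 1, by omega⟩ μ ℓ
        (fun y => F (fun j => if (j : ℕ) < p then (y j : ℂ) else Complex.I * y j)) w
      = Complex.I ^ ℓ * juhlOpC ⟨n - 1, by omega⟩ μ ℓ F
          (fun j => if (j : ℕ) < p then (w j : ℂ) else Complex.I * w j) := by
  rw [show (fun y : Fin n → ℝ => F (fun j => if (j : ℕ) < p then (y j : ℂ) else Complex.I * y j))
      = fun y => F (emb p y) from by funext y; rw [emb_eq_ite y]]
  rw [emb_eq_ite w]
  exact juhl_aux ε hε _ (by simp; omega) F hF μ ℓ w
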